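/- Crossing-sequence composition for space-bounded machines: let T be a deterministic Turing machine with read-only input tape and work tape, and suppose the input x of length n is split into K consecutive blocks. For block j, define the block-transition function T_j : C × {L, R} × S → C × {L, R, accept, reject} × S mapping (work-tape configuration, side from which the input head enters block j, control state) to the outcome when the computation next leaves block j (or halts inside it). Then the acceptance of x by T is determined by iterated composition of the functions T_1, …, T_K (with entry sides flipped appropriately: exiting block j on the right means entering block j+1 on the left, and vice versa), starting from the initial configuration with the input head at the left end of block 1. -/
import Mathlib


open Classical

abbrev Lang := Set (List Bool)

inductive Move | left | right | stay

/-- A deterministic Turing machine with a two-way read-only input tape and a work tape. -/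
structure TM where
  states : ℕ
  start : Fin states
  accept : Fin states
  reject : Fin states
  δ : Fin states → Option Bool → Option Bool → Fin states × Option Bool × Move × Move

namespace TM

structure Cfg (M : TM) where
  q : Fin M.states
  ipos : ℤ
  wtape : ℤ → Option Bool
  wpos : ℤ

def inputSym (x : List Bool) (i : ℤ) : Option Bool :=
  if 0 ≤ i ∧ i < x.length then some (x.getD i.toNat false) else none

def applyMove (p : ℤ) : Move → ℤ
  | .left => p - 1
  | .right => p + 1
  | .stay => p

def step (M : TM) (x : List Bool) (c : Cfg M) : Cfg M :=
  if c.q = M.accept ∨ c.q = M.reject then c else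
  let t := M.δ c.q (inputSym x c.ipos) (c.wtape c.wpos)
  { q := t.1
    ipos := applyMove c.ipos t.2.2.1
    wtape := Function.update c.wtape c.wpos t.2.1
    wpos := applyMove c.wpos t.2.2.2 }

def init (M : TM) : Cfg M := ⟨M.start, 0, fun _ => none, 0⟩

/-- The configuration after `t` steps on input `x`. -/
def run (M : TM) (x : List Bool) (t : ℕ) : Cfg M := (M.step x)^[t] (init M)

def Halted (M : TM) (c : Cfg M) : Prop := c.q = M.accept ∨ c.q = M.reject

/-- `M` decides `L` within time bound `T`. -/
def DecidesInTime (M : TM) (L : Lang) (T : ℕ → ℝ) : Prop :=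
  ∀ x : List Bool, ∃ t : ℕ, (t : ℝ) ≤ T x.length ∧
    Halted M (run M x t) ∧ ((run M x t).q = M.accept ↔ x ∈ L)

/-- `M` decides `L` within time `T` and work-tape space `S`. -/
def DecidesInTimeSpace (M : TM) (L : Lang) (T S : ℕ → ℝ) : Prop :=
  ∀ x : List Bool, ∃ t : ℕ, (t : ℝ) ≤ T x.length ∧
    (∀ t' ≤ t, ((|(run M x t').wpos| : ℤ) : ℝ) ≤ S x.length) ∧
    Halted M (run M x t) ∧ ((run M x t).q = M.accept ↔ x ∈ L)

/-- `M` decides `L` within work-tape space `S` (no time bound). -/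
def DecidesInSpace (M : TM) (L : Lang) (S : ℕ → ℝ) : Prop :=
  ∀ x : List Bool, ∃ t : ℕ,
    (∀ t' ≤ t, ((|(run M x t').wpos| : ℤ) : ℝ) ≤ S x.length) ∧
    Halted M (run M x t) ∧ ((run M x t).q = M.accept ↔ x ∈ L)

end TM

/-- Languages decidable in deterministic time `O(T(n))`. -/
def TIMEc (T : ℕ → ℝ) : Set Lang :=
  { L | ∃ (M : TM) (C : ℕ), 0 < C ∧ M.DecidesInTime L (fun n => C * T n + C) }

/-- Languages decidable in simultaneous deterministic time `O(T(n))` and space `O(S(n))`. -/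
def TISPc (T S : ℕ → ℝ) : Set Lang :=
  { L | ∃ (M : TM) (C : ℕ), 0 < C ∧
      M.DecidesInTimeSpace L (fun n => C * T n + C) (fun n => C * S n + C) }

/-- Languages decidable in deterministic space `O(S(n))`. -/
def SPACEc (S : ℕ → ℝ) : Set Lang :=
  { L | ∃ (M : TM) (C : ℕ), 0 < C ∧ M.DecidesInSpace L (fun n => C * S n + C) }

namespace TM

/-- The output of a halted machine: the contents of work-tape cells `0, 1, …`
up to the first blank cell. -/
noncomputable def outLen (M : TM) (c : Cfg M) : ℕ :=
  if h : ∃ k : ℕ, c.wtape k = none then Nat.find h else 0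

noncomputable def output (M : TM) (c : Cfg M) : List Bool :=
  (List.range (outLen M c)).map (fun i => (c.wtape i).getD false)

/-- On the specific input `inp`, `M` halts accepting within time `T` and space `S`,
with `out` written on its work tape. -/
noncomputable def RunsTo (M : TM) (inp out : List Bool) (T S : ℝ) : Prop :=
  ∃ t : ℕ, (t : ℝ) ≤ T ∧ (∀ t' ≤ t, ((|(run M inp t').wpos| : ℤ) : ℝ) ≤ S) ∧
    (run M inp t).q = M.accept ∧ output M (run M inp t) = out

end TM

/-! ### Crossing-sequence composition for space-bounded machines -/

/-- A work-tape configuration: work-tape contents and work-head position. -/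
abbrev WC := (ℤ → Option Bool) × ℤ

/-- The possible outcomes of running the machine inside an input block: the input head
exits to the left, exits to the right, or the machine accepts or rejects inside. -/
inductive BlockOut | exitL | exitR | acc | rej

/-- The input-head position at which a computation enters block `j` (of length `B`):
its left end when entering from the left (`side = true`), its right end otherwise. -/
def entryPos (B j : ℕ) (side : Bool) : ℤ :=
  if side then (j * B : ℤ) else ((j * B + B : ℤ) - 1)

/-- `Tj` is the block-transition function of block `j`: started in work configuration
`w` and control state `q` with the input head at the appropriate end of block `j`, the
machine runs (staying inside the block and unhalted in between) until it either halts
or the input head first leaves the block, and `Tj` records the resulting work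
configuration, outcome and control state. -/
def BlockSpec (M : TM) (x : List Bool) (B j : ℕ)
    (Tj : WC × Bool × Fin M.states → WC × BlockOut × Fin M.states) : Prop :=
  ∀ (w : WC) (side : Bool) (q : Fin M.states),
    ∃ t : ℕ,
      (∀ t', 0 < t' → t' < t →
        ((M.step x)^[t'] ⟨q, entryPos B j side, w.1, w.2⟩).ipos ∈
          Set.Ico (j * B : ℤ) (j * B + B : ℤ) ∧
        ¬ M.Halted ((M.step x)^[t'] ⟨q, entryPos B j side, w.1, w.2⟩)) ∧
      (∀ ct : TM.Cfg M, ct = (M.step x)^[t] ⟨q, entryPos B j side, w.1, w.2⟩ →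
        (ct.q = M.accept ∧ Tj (w, side, q) = ((ct.wtape, ct.wpos), .acc, ct.q)) ∨
        (ct.q = M.reject ∧ ct.q ≠ M.accept ∧
          Tj (w, side, q) = ((ct.wtape, ct.wpos), .rej, ct.q)) ∨
        (¬ M.Halted ct ∧ ct.ipos = (j * B : ℤ) - 1 ∧
          Tj (w, side, q) = ((ct.wtape, ct.wpos), .exitL, ct.q)) ∨
        (¬ M.Halted ct ∧ ct.ipos = (j * B + B : ℤ) ∧
          Tj (w, side, q) = ((ct.wtape, ct.wpos), .exitR, ct.q)))

/-- One block-level step of the composed computation: apply the block-transition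
function of the current block; exiting block `j` on the left means entering block
`j - 1` from the right, and exiting on the right means entering block `j + 1` from
the left. -/
def bstep (M : TM)
    (Tfam : ℕ → WC × Bool × Fin M.states → WC × BlockOut × Fin M.states)
    (st : (ℕ × Bool × WC × Fin M.states) ⊕ Bool) :
    (ℕ × Bool × WC × Fin M.states) ⊕ Bool :=
  match st with
  | .inr b => .inr b
  | .inl (j, side, w, q) =>
    match Tfam j (w, side, q) with
    | (_, .acc, _) => .inr true
    | (_, .rej, _) => .inr false
    | (w', .exitL, q') => .inl (j - 1, false, w', q')
    | (w', .exitR, q') => .inl (j + 1, true, w', q')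

/-- `M` accepts `x`. -/
def TM.Accepts (M : TM) (x : List Bool) : Prop := ∃ t : ℕ, (TM.run M x t).q = M.accept

theorem TM.step_halted (M : TM) (x : List Bool) (c : TM.Cfg M) (h : M.Halted c) :
    M.step x c = c := by
  unfold TM.step
  rw [if_pos (show c.q = M.accept ∨ c.q = M.reject from h)]

theorem TM.iterate_halted (M : TM) (x : List Bool) (c : TM.Cfg M) (h : M.Halted c) (k : ℕ) :
    (M.step x)^[k] c = c :=
  Function.iterate_fixed (TM.step_halted M x c h) k

theorem TM.run_add (M : TM) (x : List Bool) (N k : ℕ) :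
    TM.run M x (N + k) = (M.step x)^[k] (TM.run M x N) := by
  unfold TM.run
  rw [Nat.add_comm, Function.iterate_add_apply]

/-- Crossing-sequence composition: if the input of length `K·B` is split into `K`
consecutive blocks of length `B`, and for each block `j` the function `Tfam j`
satisfies the block-transition specification, then acceptance of `x` by `M` is
determined by iterated composition of the block-transition functions (with entry
sides flipped appropriately), starting from the initial configuration with the input
head at the left end of block `0`. -/
theorem crossing_sequence_composition (M : TM) (x : List Bool) (B K : ℕ)
    (hB : 0 < B) (hK : 0 < K) (hx : x.length = K * B)
    (hhead : ∀ t : ℕ, 0 ≤ (TM.run M x t).ipos ∧ (TM.run M x t).ipos < (x.length : ℤ))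
    (Tfam : ℕ → WC × Bool × Fin M.states → WC × BlockOut × Fin M.states)
    (hT : ∀ j < K, BlockSpec M x B j (Tfam j)) :
    M.Accepts x ↔
      ∃ m : ℕ, (bstep M Tfam)^[m]
        (.inl (0, true, (fun _ => none, 0), M.start)) = .inr true := by
  set S0 : (ℕ × Bool × WC × Fin M.states) ⊕ Bool :=
    .inl (0, true, (fun _ => none, 0), M.start) with hS0
  have inv : ∀ m : ℕ,
      (∃ j side w q, (bstep M Tfam)^[m] S0 = .inl (j, side, w, q) ∧ j < K ∧
        ∃ N : ℕ, m ≤ N ∧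
          TM.run M x N = ⟨q, entryPos B j side, w.1, w.2⟩ ∧
          ∀ t < N, ¬ M.Halted (TM.run M x t)) ∨
      ((bstep M Tfam)^[m] S0 = .inr true ∧ ∃ N, (TM.run M x N).q = M.accept) ∨
      ((bstep M Tfam)^[m] S0 = .inr false ∧ ∃ N, (TM.run M x N).q = M.reject ∧
        (TM.run M x N).q ≠ M.accept ∧ ∀ t < N, ¬ M.Halted (TM.run M x t)) := by
    intro m
    induction m with
    | zero =>
      left
      refine ⟨0, true, (fun _ => none, 0), M.start, rfl, hK, 0, le_refl 0, ?_,
        fun t ht => absurd ht (Nat.not_lt_zero t)⟩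
      simp [TM.run, TM.init, entryPos]
    | succ m ih =>
      rw [Function.iterate_succ_apply']
      rcases ih with ⟨j, side, w, q, heq, hj, N, hmN, hrun, hunh⟩ | ⟨heq, hN⟩ | ⟨heq, hN⟩
      · rw [heq]
        obtain ⟨t, hmid, hct⟩ := hT j hj w side q
        set entryC : TM.Cfg M := ⟨q, entryPos B j side, w.1, w.2⟩ with hentryC
        set ct : TM.Cfg M := (M.step x)^[t] entryC with hctdef
        have hrt : TM.run M x (N + t) = ct := by
          rw [TM.run_add, hrun]
        by_cases hH : M.Halted (TM.run M x N)
        · have hfix : ct = TM.run M x N := by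
            rw [hctdef, ← hrun, TM.iterate_halted M x _ hH]
          rcases hct ct rfl with ⟨hacc, hTeq⟩ | ⟨hrej, hne, hTeq⟩ |
            ⟨hnh, _, _⟩ | ⟨hnh, _, _⟩
          · right; left
            exact ⟨by simp [bstep, hTeq], N + t, by rw [hrt]; exact hacc⟩
          · right; right
            refine ⟨by simp [bstep, hTeq], N, ?_, ?_, hunh⟩
            · rw [← hfix]; exact hrej
            · rw [← hfix]; exact hne
          · exact absurd (hfix ▸ hH) hnh
          · exact absurd (hfix ▸ hH) hnh
        · have hclaim : ∀ s < t, ¬ M.Halted (TM.run M x (N + s)) := by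
            intro s hs
            rcases Nat.eq_zero_or_pos s with h0 | hpos
            · subst h0; simpa using hH
            · have := (hmid s hpos hs).2
              rw [TM.run_add, hrun]
              exact this
          have hbefore : ∀ t' < N + t, ¬ M.Halted (TM.run M x t') := by
            intro t' ht'
            rcases Nat.lt_or_ge t' N with h | h
            · exact hunh t' h
            · have : t' = N + (t' - N) := by omega
              rw [this]
              exact hclaim (t' - N) (by omega)
          rcases hct ct rfl with ⟨hacc, hTeq⟩ | ⟨hrej, hne, hTeq⟩ |
            ⟨hnh, hpos, hTeq⟩ | ⟨hnh, hpos, hTeq⟩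
          · right; left
            exact ⟨by simp [bstep, hTeq], N + t, by rw [hrt]; exact hacc⟩
          · right; right
            refine ⟨by simp [bstep, hTeq], N + t, ?_, ?_, hbefore⟩
            · rw [hrt]; exact hrej
            · rw [hrt]; exact hne
          · -- exit left
            have ht1 : 1 ≤ t := by
              by_contra h
              have h0 : t = 0 := by omega
              have : ct = entryC := by rw [hctdef, h0]; rfl
              rw [this] at hpos
              cases side <;> simp [entryPos, hentryC] at hpos <;> omega
            have hj1 : 1 ≤ j := by
              by_contra h
              have hj0 : j = 0 := by omega
              have h0 := (hhead (N + t)).1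
              rw [hrt, hpos, hj0] at h0
              simp at h0
            have hcast : ((j - 1 : ℕ) : ℤ) = (j : ℤ) - 1 := by omega
            have hip : entryPos B (j - 1) false = ct.ipos := by
              rw [hpos]
              simp only [entryPos, if_neg (by simp : ¬ (false = true))]
              rw [hcast]; ring
            left
            refine ⟨j - 1, false, (ct.wtape, ct.wpos), ct.q, by simp [bstep, hTeq],
              by omega, N + t, by omega, ?_, hbefore⟩
            rw [hrt, hip]
          · -- exit right
            have ht1 : 1 ≤ t := by
              by_contra h
              have h0 : t = 0 := by omega
              have : ct = entryC := by rw [hctdef, h0]; rfl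
              rw [this] at hpos
              cases side <;> simp [entryPos, hentryC] at hpos <;> omega
            have hjK : j + 1 < K := by
              have h0 := (hhead (N + t)).2
              rw [hrt, hpos, hx] at h0
              push_cast at h0
              have hZ : (((j + 1) * B : ℕ) : ℤ) < ((K * B : ℕ) : ℤ) := by
                push_cast; linarith
              have hNat : (j + 1) * B < K * B := by exact_mod_cast hZ
              exact lt_of_mul_lt_mul_right hNat (Nat.zero_le B)
            have hip : entryPos B (j + 1) true = ct.ipos := by
              rw [hpos]
              simp only [entryPos, if_pos rfl]
              push_cast; ring
            left
            refine ⟨j + 1, true, (ct.wtape, ct.wpos), ct.q, by simp [bstep, hTeq],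
              hjK, N + t, by omega, ?_, hbefore⟩
            rw [hrt, hip]
      · right; left
        rw [heq]
        exact ⟨rfl, hN⟩
      · right; right
        rw [heq]
        exact ⟨rfl, hN⟩
  constructor
  · rintro ⟨ta, hta⟩
    have hhalt : ∃ t, M.Halted (TM.run M x t) := ⟨ta, Or.inl hta⟩
    have hspec := Nat.find_spec hhalt
    set t0 := Nat.find hhalt with ht0
    rcases inv (t0 + 1) with ⟨j, side, w, q, heq, hj, N, hmN, hrun, hunh⟩ |
      ⟨heq, _⟩ | ⟨heq, N, hq, hne, hunh⟩
    · exact absurd hspec (hunh t0 (by omega))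
    · exact ⟨t0 + 1, heq⟩
    · exfalso
      have hNle : N ≤ ta := by
        by_contra h
        exact hunh ta (by omega) (Or.inl hta)
      have hsame : TM.run M x ta = TM.run M x N := by
        have h2 := TM.run_add M x N (ta - N)
        rw [Nat.add_sub_cancel' hNle] at h2
        rw [h2, TM.iterate_halted M x _ (Or.inr hq)]
      exact hne (hsame ▸ hta)
  · rintro ⟨m, hm⟩
    rcases inv m with ⟨j, side, w, q, heq, _⟩ | ⟨_, N, hq⟩ | ⟨heq, _⟩
    · rw [hm] at heq; exact absurd heq (by simp)
    · exact ⟨N, hq⟩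
    · rw [hm] at heq; exact absurd heq (by simp)
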